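/- arXiv:1712.01000 — 7 statements merged into one kernel-verified Lean document; each statement's English description precedes it below -/
import Mathlib

section
/- Let B₁ and B₂ be two disjoint open balls in ℝⁿ with centers c₁, c₂ on the sphere of radius r centered at the origin, and radii r₂ ≤ r₁ < r. For any homothety coefficients k₁, k₂ with k₂ ≥ k₁ ≥ 1, the ball with center k₁·c₁ and radius k₁·r₁ is disjoint from the ball with center k₂·c₂ and radius k₂·r₂. -/
theorem stmt_0 (n : ℕ) (c₁ c₂ : EuclideanSpace ℝ (Fin n)) (r r₁ r₂ k₁ k₂ : ℝ)
    (hc₁ : ‖c₁‖ = r) (hc₂ : ‖c₂‖ = r)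
    (hr₂ : 0 < r₂) (hr₁₂ : r₂ ≤ r₁) (hr₁ : r₁ < r)
    (hdisj : Disjoint (Metric.ball c₁ r₁) (Metric.ball c₂ r₂))
    (hk₁ : 1 ≤ k₁) (hk : k₁ ≤ k₂) :
    Disjoint (Metric.ball (k₁ • c₁) (k₁ * r₁)) (Metric.ball (k₂ • c₂) (k₂ * r₂)) := by
  have hr₁0 : 0 < r₁ := lt_of_lt_of_le hr₂ hr₁₂
  have hk₁0 : (0:ℝ) ≤ k₁ := le_trans zero_le_one hk₁
  have hk₂0 : (0:ℝ) ≤ k₂ := le_trans hk₁0 hk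
  have hd : r₁ + r₂ ≤ dist c₁ c₂ := (disjoint_ball_ball_iff hr₁0 hr₂).mp hdisj
  apply Metric.ball_disjoint_ball
  set t : ℝ := inner ℝ c₁ c₂ with ht
  have e1 : dist c₁ c₂ ^ 2 = r^2 - 2*t + r^2 := by
    rw [dist_eq_norm, @norm_sub_sq_real, hc₁, hc₂, ht]
  have e2 : dist (k₁ • c₁) (k₂ • c₂) ^ 2 = k₁^2*r^2 - 2*(k₁*k₂)*t + k₂^2*r^2 := by
    rw [dist_eq_norm, @norm_sub_sq_real, norm_smul, norm_smul,
      real_inner_smul_left, real_inner_smul_right, hc₁, hc₂, ht,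
      Real.norm_eq_abs, Real.norm_eq_abs, abs_of_nonneg hk₁0, abs_of_nonneg hk₂0]
    ring
  have key : (k₁*r₁ + k₂*r₂)^2 ≤ dist (k₁ • c₁) (k₂ • c₂) ^ 2 := by
    have hsq : (r₁ + r₂)^2 ≤ 2*r^2 - 2*t := by
      nlinarith [dist_nonneg (x := c₁) (y := c₂)]
    have h3 : 0 ≤ (k₂ - k₁) * ((k₂ - k₁)*r^2 + k₁*r₁^2 - k₂*r₂^2) := by
      have h4 : r₂^2 ≤ r₁^2 := by nlinarith
      have h5 : r₂^2 ≤ r^2 := by nlinarith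
      nlinarith [mul_le_mul_of_nonneg_left h4 hk₁0,
        mul_le_mul_of_nonneg_left h5 (sub_nonneg.mpr hk)]
    nlinarith [h3, sq_nonneg (k₂ - k₁),
      mul_le_mul_of_nonneg_left hsq (mul_nonneg hk₁0 hk₂0)]
  have hpos : 0 ≤ k₁*r₁ + k₂*r₂ :=
    add_nonneg (mul_nonneg hk₁0 hr₁0.le) (mul_nonneg hk₂0 hr₂.le)
  exact le_of_pow_le_pow_left₀ two_ne_zero dist_nonneg key
end

section
/- Let B₁ and B₂ be two disjoint open balls in ℝⁿ with centers on the sphere S(0, r) and radii r₁, r₂ < r. If both balls are scaled by homotheties centered at the origin so that they acquire the same radius r₁ (i.e., B₁ is unchanged and B₂ is scaled by factor r₁/r₂ ≥ 1), then the resulting two balls of equal radius r₁ are disjoint. -/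
theorem stmt_1 (n : ℕ) (c₁ c₂ : EuclideanSpace ℝ (Fin n)) (r r₁ r₂ : ℝ)
    (hc₁ : ‖c₁‖ = r) (hc₂ : ‖c₂‖ = r)
    (hr₂ : 0 < r₂) (hr₁₂ : r₂ ≤ r₁) (hr₁ : r₁ < r)
    (hdisj : Disjoint (Metric.ball c₁ r₁) (Metric.ball c₂ r₂)) :
    Disjoint (Metric.ball c₁ r₁) (Metric.ball ((r₁ / r₂) • c₂) r₁) := by
  have hr₁pos : 0 < r₁ := lt_of_lt_of_le hr₂ hr₁₂
  have hdist : r₁ + r₂ ≤ dist c₁ c₂ :=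
    (disjoint_ball_ball_iff hr₁pos hr₂).mp hdisj
  set t : ℝ := r₁ / r₂ with ht
  have ht1 : 1 ≤ t := (one_le_div hr₂).mpr hr₁₂
  set ip : ℝ := inner ℝ c₁ c₂ with hipdef
  have hd2 : (dist c₁ c₂)^2 = ‖c₁‖^2 - 2 * ip + ‖c₂‖^2 := by
    rw [dist_eq_norm, @norm_sub_sq_real]
  have hipbound : ip ≤ r^2 - (r₁ + r₂)^2 / 2 := by
    have h1 : (r₁ + r₂)^2 ≤ (dist c₁ c₂)^2 := by
      apply sq_le_sq' <;> nlinarith [dist_nonneg (x := c₁) (y := c₂)]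
    rw [hd2, hc₁, hc₂] at h1
    linarith
  have hsmul : (inner ℝ c₁ (t • c₂) : ℝ) = t * ip := by
    rw [real_inner_smul_right, hipdef]
  have hd2' : (dist c₁ (t • c₂))^2 = ‖c₁‖^2 - 2 * (t * ip) + t^2 * ‖c₂‖^2 := by
    rw [dist_eq_norm, @norm_sub_sq_real, hsmul, norm_smul,
      Real.norm_eq_abs, abs_of_pos (by linarith : (0:ℝ) < t)]
    ring
  have e2 : t * r₂ = r₁ := by rw [ht, div_mul_cancel₀ _ hr₂.ne']
  have e1' : ((t - 1) * r₂)^2 = (r₁ - r₂)^2 := by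
    rw [sub_mul, one_mul, e2]
  have e2' : t * r₂^2 = r₁ * r₂ := by rw [pow_two, ← mul_assoc, e2]
  have h1 : t * ip ≤ t * (r^2 - (r₁ + r₂)^2 / 2) :=
    mul_le_mul_of_nonneg_left hipbound (by linarith)
  have hrr : r₁^2 ≤ r^2 := by nlinarith
  have h2 : r₁^2 * (t - 1)^2 ≤ r^2 * (t - 1)^2 :=
    mul_le_mul_of_nonneg_right hrr (sq_nonneg (t - 1))
  have h3 : 4 * r₁^2 * r₂^2 ≤ (r₁^2 * (t - 1)^2 + t * (r₁ + r₂)^2) * r₂^2 := by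
    calc 4 * r₁^2 * r₂^2 ≤ r₁^2 * (r₁ - r₂)^2 + (r₁ * r₂) * (r₁ + r₂)^2 := by
          nlinarith [mul_nonneg (mul_nonneg hr₁pos.le (sq_nonneg (r₁ - r₂)))
            (add_pos hr₁pos hr₂).le]
      _ = (r₁^2 * (t - 1)^2 + t * (r₁ + r₂)^2) * r₂^2 := by
          rw [← e1', ← e2']; ring
  have h3' : 4 * r₁^2 ≤ r₁^2 * (t - 1)^2 + t * (r₁ + r₂)^2 :=
    le_of_mul_le_mul_right (by linarith [h3]) (by positivity : (0:ℝ) < r₂^2)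
  have key : (2 * r₁)^2 ≤ (dist c₁ (t • c₂))^2 := by
    rw [hd2', hc₁, hc₂]
    nlinarith [h1, h2, h3']
  have hgoal : r₁ + r₁ ≤ dist c₁ (t • c₂) := by
    have hd : (0:ℝ) ≤ dist c₁ (t • c₂) := dist_nonneg
    set d := dist c₁ (t • c₂) with hdd
    clear_value t ip d
    have h2r : (0:ℝ) ≤ 2 * r₁ := by linarith
    have := (pow_le_pow_iff_left₀ h2r hd two_ne_zero).mp key
    linarith
  exact Metric.ball_disjoint_ball hgoal
end

section
/- In ℝ², two disjoint closed balls not containing a fixed point x can generate a shadow at x: there exist two disjoint closed balls B₁, B₂ in ℝ² with x ∉ B₁ ∪ B₂ such that every line through x intersects B₁ ∪ B₂. -/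
lemma norm_le_of_sq (w : EuclideanSpace ℝ (Fin 2)) (r : ℝ) (hr : 0 ≤ r)
    (h : (w 0) ^ 2 + (w 1) ^ 2 ≤ r ^ 2) : ‖w‖ ≤ r := by
  rw [EuclideanSpace.norm_eq]
  rw [Fin.sum_univ_two]
  simp only [Real.norm_eq_abs, sq_abs]
  calc Real.sqrt ((w 0)^2 + (w 1)^2) ≤ Real.sqrt (r^2) := Real.sqrt_le_sqrt h
    _ = r := Real.sqrt_sq hr

theorem stmt_7 (x : EuclideanSpace ℝ (Fin 2)) :
    ∃ (c₁ c₂ : EuclideanSpace ℝ (Fin 2)) (ρ₁ ρ₂ : ℝ), 0 < ρ₁ ∧ 0 < ρ₂ ∧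
      Disjoint (Metric.closedBall c₁ ρ₁) (Metric.closedBall c₂ ρ₂) ∧
      x ∉ Metric.closedBall c₁ ρ₁ ∪ Metric.closedBall c₂ ρ₂ ∧
      ∀ v : EuclideanSpace ℝ (Fin 2), v ≠ 0 →
        ∃ t : ℝ, x + t • v ∈ Metric.closedBall c₁ ρ₁ ∪ Metric.closedBall c₂ ρ₂ := by
  set e1 : EuclideanSpace ℝ (Fin 2) := EuclideanSpace.single 1 (1 : ℝ) with he1
  set e0 : EuclideanSpace ℝ (Fin 2) := EuclideanSpace.single 0 (100 : ℝ) with he0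
  have he1norm : ‖e1‖ = 1 := by simp [he1, EuclideanSpace.norm_single]
  have he0norm : ‖e0‖ = 100 := by
    simp [he0, EuclideanSpace.norm_single]
  refine ⟨x + e1, x + e0, 9/10, 90, by norm_num, by norm_num, ?_, ?_, ?_⟩
  · -- disjoint
    apply Metric.closedBall_disjoint_closedBall
    have : dist (x + e1) (x + e0) = ‖e1 - e0‖ := by
      rw [dist_add_left, dist_eq_norm]
    rw [this]
    have h0 : (e1 - e0) 0 = -100 := by
      simp [he1, he0, EuclideanSpace.single_apply]
    have h1 : (e1 - e0) 1 = 1 := by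
      simp [he1, he0, EuclideanSpace.single_apply]
    have : ‖e1 - e0‖ = Real.sqrt 10001 := by
      rw [EuclideanSpace.norm_eq, Fin.sum_univ_two, h0, h1]
      norm_num
    rw [this]
    have hs : Real.sqrt 10001 ^ 2 = 10001 := Real.sq_sqrt (by norm_num)
    nlinarith [Real.sqrt_nonneg (10001 : ℝ)]
  · -- x not in union
    intro hx
    rcases hx with hx | hx
    · rw [Metric.mem_closedBall] at hx
      rw [dist_eq_norm] at hx
      have h' : x - (x + e1) = -e1 := by abel
      rw [h', norm_neg, he1norm] at hx
      linarith
    · rw [Metric.mem_closedBall] at hx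
      rw [dist_eq_norm] at hx
      have h' : x - (x + e0) = -e0 := by abel
      rw [h', norm_neg, he0norm] at hx
      linarith
  · -- every line hits a ball
    intro v hv
    set a := v 0 with ha
    set b := v 1 with hb
    have hS : 0 < a ^ 2 + b ^ 2 := by
      rcases lt_or_eq_of_le (by positivity : (0:ℝ) ≤ a ^ 2 + b ^ 2) with h | h
      · exact h
      · exfalso; apply hv
        have ha0 : a = 0 := by nlinarith [sq_nonneg a, sq_nonneg b]
        have hb0 : b = 0 := by nlinarith [sq_nonneg a, sq_nonneg b]
        ext i
        fin_cases i
        · exact ha0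
        · exact hb0
    rcases le_total (a ^ 2) (b ^ 2) with hcase | hcase
    · -- use ball 1
      refine ⟨b / (a ^ 2 + b ^ 2), Or.inl ?_⟩
      rw [Metric.mem_closedBall]
      have hd : dist (x + (b / (a ^ 2 + b ^ 2)) • v) (x + e1)
          = ‖(b / (a ^ 2 + b ^ 2)) • v - e1‖ := by
        rw [dist_add_left, dist_eq_norm]
      rw [hd]
      set t := b / (a ^ 2 + b ^ 2) with ht
      apply norm_le_of_sq _ _ (by norm_num)
      have h0 : (t • v - e1) 0 = t * a := by
        simp [he1, EuclideanSpace.single_apply, ha]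
      have h1 : (t • v - e1) 1 = t * b - 1 := by
        simp [he1, EuclideanSpace.single_apply, hb]
      rw [h0, h1, ht]
      have h2 : (b / (a ^ 2 + b ^ 2) * a) ^ 2 + (b / (a ^ 2 + b ^ 2) * b - 1) ^ 2
          = a ^ 2 / (a ^ 2 + b ^ 2) := by
        field_simp
        ring
      rw [h2]
      rw [div_le_iff₀ hS]
      nlinarith
    · -- use ball 2
      refine ⟨100 * a / (a ^ 2 + b ^ 2), Or.inr ?_⟩
      rw [Metric.mem_closedBall]
      have hd : dist (x + (100 * a / (a ^ 2 + b ^ 2)) • v) (x + e0)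
          = ‖(100 * a / (a ^ 2 + b ^ 2)) • v - e0‖ := by
        rw [dist_add_left, dist_eq_norm]
      rw [hd]
      set t := 100 * a / (a ^ 2 + b ^ 2) with ht
      apply norm_le_of_sq _ _ (by norm_num)
      have h0 : (t • v - e0) 0 = t * a - 100 := by
        simp [he0, EuclideanSpace.single_apply, ha]
      have h1 : (t • v - e0) 1 = t * b := by
        simp [he0, EuclideanSpace.single_apply, hb]
      rw [h0, h1, ht]
      have h2 : (100 * a / (a ^ 2 + b ^ 2) * a - 100) ^ 2
            + (100 * a / (a ^ 2 + b ^ 2) * b) ^ 2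
          = 10000 * b ^ 2 / (a ^ 2 + b ^ 2) := by
        field_simp
        ring
      rw [h2]
      rw [div_le_iff₀ hS]
      nlinarith
end

section
/- In ℝ², two disjoint closed balls of equal radius, not containing a fixed point x, can generate a shadow at x. -/
theorem stmt_9 (x : EuclideanSpace ℝ (Fin 2)) :
    ∃ (c₁ c₂ : EuclideanSpace ℝ (Fin 2)) (ρ : ℝ), 0 < ρ ∧
      Disjoint (Metric.closedBall c₁ ρ) (Metric.closedBall c₂ ρ) ∧
      x ∉ Metric.closedBall c₁ ρ ∪ Metric.closedBall c₂ ρ ∧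
      ∀ v : EuclideanSpace ℝ (Fin 2), v ≠ 0 →
        ∃ t : ℝ, x + t • v ∈ Metric.closedBall c₁ ρ ∪ Metric.closedBall c₂ ρ := by
  refine ⟨x + (1.2:ℝ) • EuclideanSpace.single 0 1, x + (1.7:ℝ) • EuclideanSpace.single 1 1, 1,
    one_pos, ?_, ?_, ?_⟩
  · refine Metric.closedBall_disjoint_closedBall ?_
    rw [EuclideanSpace.dist_eq, Fin.sum_univ_two, Real.lt_sqrt (by positivity)]
    simp only [PiLp.add_apply, PiLp.smul_apply, EuclideanSpace.single_apply, smul_eq_mul,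
      Real.dist_eq, sq_abs]
    norm_num
  · have d1 : (1:ℝ) < dist x (x + (1.2:ℝ) • EuclideanSpace.single 0 1) := by
      rw [EuclideanSpace.dist_eq, Fin.sum_univ_two, Real.lt_sqrt (by positivity)]
      simp only [PiLp.add_apply, PiLp.smul_apply, EuclideanSpace.single_apply, smul_eq_mul,
        Real.dist_eq, sq_abs]
      norm_num
    have d2 : (1:ℝ) < dist x (x + (1.7:ℝ) • EuclideanSpace.single 1 1) := by
      rw [EuclideanSpace.dist_eq, Fin.sum_univ_two, Real.lt_sqrt (by positivity)]
      simp only [PiLp.add_apply, PiLp.smul_apply, EuclideanSpace.single_apply, smul_eq_mul,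
        Real.dist_eq, sq_abs]
      norm_num
    rintro (hx | hx) <;> rw [Metric.mem_closedBall] at hx <;> linarith
  · intro v hv
    set a := v 0 with ha
    set b := v 1 with hb
    have hs : 0 < a ^ 2 + b ^ 2 := by
      by_contra h
      push_neg at h
      have h0 : a = 0 := by nlinarith [sq_nonneg a, sq_nonneg b]
      have h1 : b = 0 := by nlinarith [sq_nonneg a, sq_nonneg b]
      exact hv (by ext i; fin_cases i <;> simp [← ha, ← hb, h0, h1])
    have hs' : a ^ 2 + b ^ 2 ≠ 0 := ne_of_gt hs
    by_cases hcase : 0.44 * b ^ 2 ≤ a ^ 2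
    · refine ⟨1.2 * a / (a ^ 2 + b ^ 2), Or.inl ?_⟩
      rw [Metric.mem_closedBall, EuclideanSpace.dist_eq, Fin.sum_univ_two,
        show (1:ℝ) = Real.sqrt 1 by simp]
      refine Real.sqrt_le_sqrt ?_
      simp only [PiLp.add_apply, PiLp.smul_apply, EuclideanSpace.single_apply, smul_eq_mul,
        Real.dist_eq, sq_abs]
      norm_num
      rw [← ha, ← hb,
        show (6 / 5 * a / (a ^ 2 + b ^ 2) * a - 6 / 5) ^ 2 + (6 / 5 * a / (a ^ 2 + b ^ 2) * b) ^ 2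
          = (36 / 25) * b ^ 2 / (a ^ 2 + b ^ 2) by field_simp; ring,
        div_le_one hs]
      nlinarith
    · refine ⟨1.7 * b / (a ^ 2 + b ^ 2), Or.inr ?_⟩
      rw [Metric.mem_closedBall, EuclideanSpace.dist_eq, Fin.sum_univ_two,
        show (1:ℝ) = Real.sqrt 1 by simp]
      refine Real.sqrt_le_sqrt ?_
      simp only [PiLp.add_apply, PiLp.smul_apply, EuclideanSpace.single_apply, smul_eq_mul,
        Real.dist_eq, sq_abs]
      norm_num
      rw [← ha, ← hb,
        show (17 / 10 * b / (a ^ 2 + b ^ 2) * a) ^ 2 + (17 / 10 * b / (a ^ 2 + b ^ 2) * b - 17 / 10) ^ 2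
          = (289 / 100) * a ^ 2 / (a ^ 2 + b ^ 2) by field_simp; ring,
        div_le_one hs]
      nlinarith
end

section
/- Let x ∈ ℝⁿ, n ≥ 2. Suppose closed balls B₁, …, B_m (m < ∞), pairwise disjoint and not containing x, generate a shadow at x. Then m ≥ n. -/
theorem stmt_10 (n : ℕ) (hn : 2 ≤ n) (x : EuclideanSpace ℝ (Fin n)) (m : ℕ)
    (c : Fin m → EuclideanSpace ℝ (Fin n)) (ρ : Fin m → ℝ)
    (hρ : ∀ i, 0 < ρ i)
    (hdisj : ∀ i j, i ≠ j →
      Disjoint (Metric.closedBall (c i) (ρ i)) (Metric.closedBall (c j) (ρ j)))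
    (hx : ∀ i, x ∉ Metric.closedBall (c i) (ρ i))
    (hshadow : ∀ v : EuclideanSpace ℝ (Fin n), v ≠ 0 →
      ∃ (i : Fin m) (t : ℝ), x + t • v ∈ Metric.closedBall (c i) (ρ i)) :
    n ≤ m := by
  by_contra h
  push_neg at h
  set K : Submodule ℝ (EuclideanSpace ℝ (Fin n)) :=
    Submodule.span ℝ (Set.range (fun i => c i - x)) with hKdef
  have hK : Module.finrank ℝ K ≤ m := by
    simpa [Set.finrank] using (finrank_range_le_card (R := ℝ) (fun i => c i - x)).trans (by simp)
  have hKne : K ≠ ⊤ := by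
    intro hTop
    have : Module.finrank ℝ (EuclideanSpace ℝ (Fin n)) ≤ m := by
      rw [← finrank_top ℝ (EuclideanSpace ℝ (Fin n)), ← hTop]
      exact hK
    rw [finrank_euclideanSpace_fin] at this
    omega
  have horthne : Kᗮ ≠ ⊥ := by
    intro hb
    exact hKne (Submodule.orthogonal_eq_bot_iff.mp hb)
  obtain ⟨v, hvK, hv0⟩ := Submodule.exists_mem_ne_zero_of_ne_bot horthne
  obtain ⟨i, t, ht⟩ := hshadow v hv0
  have hmem : (c i - x) ∈ K := Submodule.subset_span ⟨i, rfl⟩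
  have hinner : (inner ℝ (c i - x) v : ℝ) = 0 :=
    (Submodule.mem_orthogonal K v).mp hvK _ hmem
  have hdist : dist (x + t • v) (c i) ^ 2
      = t ^ 2 * ‖v‖ ^ 2 + ‖c i - x‖ ^ 2 := by
    rw [dist_eq_norm]
    have : x + t • v - c i = t • v - (c i - x) := by abel
    rw [this, norm_sub_sq_real]
    have h2 : (inner ℝ (t • v) (c i - x) : ℝ) = 0 := by
      rw [real_inner_smul_left, real_inner_comm, hinner, mul_zero]
    rw [h2, norm_smul]
    simp [mul_pow, abs_mul_abs_self, sq_abs]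
  have hxlt : ρ i < dist x (c i) := by
    have := hx i
    rw [Metric.mem_closedBall] at this
    linarith [not_le.mp this]
  have hnorm : ‖c i - x‖ = dist x (c i) := by
    rw [dist_eq_norm, ← norm_neg]
    congr 1
    abel
  have hle : dist (x + t • v) (c i) ≤ ρ i := Metric.mem_closedBall.mp ht
  nlinarith [sq_nonneg (t * ‖v‖), dist_nonneg (x := x + t • v) (y := c i),
    (hρ i).le, dist_nonneg (x := x) (y := c i), sq_nonneg t, sq_nonneg ‖v‖]
end

section
/- Suppose in ℝⁿ there exist m pairwise disjoint open balls B(c_i, r_i), not containing a fixed point x, whose centers lie on a common sphere S(x, R) centered at x, and which generate a shadow at x. Then, replacing each ball by its homothetic image with center x and coefficient k_i = r₁/r_i (where r₁ = max radius), one obtains m pairwise disjoint open balls of equal radius r₁, not containing x, that still generate a shadow at x. -/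
open Metric

lemma key_ineq {E : Type*} [NormedAddCommGroup E] [InnerProductSpace ℝ E]
    (u v : E) (R a b M : ℝ) (hu : ‖u‖ = R) (hv : ‖v‖ = R)
    (ha : 0 < a) (hb : 0 < b) (hM : 0 < M)
    (hsep : a + b ≤ ‖u - v‖) :
    2 * M ≤ ‖(M / a) • u - (M / b) • v‖ := by
  have h1 := norm_sub_sq_real u v
  have h2 : ‖(M / a) • u - (M / b) • v‖ ^ 2
      = (M / a) ^ 2 * ‖u‖ ^ 2 - 2 * ((M / a) * (M / b)) * inner ℝ u v
        + (M / b) ^ 2 * ‖v‖ ^ 2 := by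
    rw [norm_sub_sq_real, norm_smul, norm_smul, real_inner_smul_left,
      real_inner_smul_right, Real.norm_eq_abs, Real.norm_eq_abs,
      abs_of_pos (div_pos hM ha), abs_of_pos (div_pos hM hb)]
    ring
  have hsep2 : (a + b) ^ 2 ≤ ‖u - v‖ ^ 2 := by
    have : 0 ≤ a + b := by positivity
    nlinarith [norm_nonneg (u - v)]
  have hw : 0 ≤ ‖(M / a) • u - (M / b) • v‖ := norm_nonneg _
  set p := M / a with hp
  set q := M / b with hq
  have hppos : 0 < p := div_pos hM ha
  have hqpos : 0 < q := div_pos hM hb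
  have hpa : p * a = M := div_mul_cancel₀ M (ne_of_gt ha)
  have hqb : q * b = M := div_mul_cancel₀ M (ne_of_gt hb)
  have hM2 : M ^ 2 = (p * q) * (a * b) := by
    have h' : (p * q) * (a * b) = (p * a) * (q * b) := by ring
    rw [h', hpa, hqb, sq]
  have h3 : (inner ℝ u v : ℝ) ≤ R ^ 2 - (a + b) ^ 2 / 2 := by
    rw [h1, hu, hv] at hsep2; linarith
  have t1 : (0:ℝ) ≤ (p - q) ^ 2 * R ^ 2 := mul_nonneg (sq_nonneg _) (sq_nonneg _)
  have t2 : (0:ℝ) ≤ (p * q) * (a - b) ^ 2 :=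
    mul_nonneg (mul_pos hppos hqpos).le (sq_nonneg _)
  have t3 : (0:ℝ) ≤ (p * q) * (R ^ 2 - (a + b) ^ 2 / 2 - inner ℝ u v) :=
    mul_nonneg (mul_pos hppos hqpos).le (by linarith)
  have hkey : (2 * M) ^ 2 ≤ ‖p • u - q • v‖ ^ 2 := by
    rw [h2, hu, hv]
    nlinarith [t1, t2, t3]
  nlinarith
 
theorem stmt_11 (n m : ℕ) (x : EuclideanSpace ℝ (Fin n)) (R : ℝ)
    (c : Fin m → EuclideanSpace ℝ (Fin n)) (r : Fin m → ℝ) (i₀ : Fin m)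
    (hr : ∀ i, 0 < r i) (hR : ∀ i, ‖c i - x‖ = R) (hrR : ∀ i, r i < R)
    (hmax : ∀ i, r i ≤ r i₀)
    (hdisj : ∀ i j, i ≠ j →
      Disjoint (Metric.ball (c i) (r i)) (Metric.ball (c j) (r j)))
    (hx : ∀ i, x ∉ Metric.ball (c i) (r i))
    (hshadow : ∀ v : EuclideanSpace ℝ (Fin n), v ≠ 0 →
      ∃ (i : Fin m) (t : ℝ), x + t • v ∈ Metric.ball (c i) (r i)) :
    (∀ i j, i ≠ j →
      Disjoint (Metric.ball (x + (r i₀ / r i) • (c i - x)) (r i₀))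
        (Metric.ball (x + (r i₀ / r j) • (c j - x)) (r i₀))) ∧
    (∀ i, x ∉ Metric.ball (x + (r i₀ / r i) • (c i - x)) (r i₀)) ∧
    (∀ v : EuclideanSpace ℝ (Fin n), v ≠ 0 →
      ∃ (i : Fin m) (t : ℝ), x + t • v ∈ Metric.ball (x + (r i₀ / r i) • (c i - x)) (r i₀)) := by
  have hr0 : 0 < r i₀ := hr i₀
  refine ⟨?_, ?_, ?_⟩
  · intro i j hij
    have hd : r i + r j ≤ dist (c i) (c j) :=
      (disjoint_ball_ball_iff (hr i) (hr j)).mp (hdisj i j hij)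
    apply ball_disjoint_ball
    have heq : dist (x + (r i₀ / r i) • (c i - x)) (x + (r i₀ / r j) • (c j - x))
        = ‖(r i₀ / r i) • (c i - x) - (r i₀ / r j) • (c j - x)‖ := by
      rw [dist_eq_norm]; congr 1; abel
    rw [heq]
    have := key_ineq (c i - x) (c j - x) R (r i) (r j) (r i₀) (hR i) (hR j)
      (hr i) (hr j) hr0 (by rw [dist_eq_norm] at hd; calc r i + r j ≤ ‖c i - c j‖ := hd
        _ = ‖(c i - x) - (c j - x)‖ := by congr 1; abel)
    linarith
  · intro i
    simp only [mem_ball, not_lt]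
    have heq : dist x (x + (r i₀ / r i) • (c i - x)) = (r i₀ / r i) * R := by
      rw [dist_eq_norm]
      have : x - (x + (r i₀ / r i) • (c i - x)) = -((r i₀ / r i) • (c i - x)) := by abel
      rw [this, norm_neg, norm_smul, hR i, Real.norm_eq_abs,
        abs_of_pos (div_pos hr0 (hr i))]
    rw [heq]
    calc r i₀ = (r i₀ / r i) * r i := (div_mul_cancel₀ _ (ne_of_gt (hr i))).symm
      _ ≤ (r i₀ / r i) * R :=
        mul_le_mul_of_nonneg_left (le_of_lt (hrR i)) (le_of_lt (div_pos hr0 (hr i)))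
  · intro v hv
    obtain ⟨i, t, ht⟩ := hshadow v hv
    refine ⟨i, (r i₀ / r i) * t, ?_⟩
    rw [mem_ball, dist_eq_norm] at ht ⊢
    have e : x + ((r i₀ / r i) * t) • v - (x + (r i₀ / r i) • (c i - x))
        = (r i₀ / r i) • (t • v - (c i - x)) := by module
    have e2 : x + t • v - c i = t • v - (c i - x) := by module
    rw [e2] at ht
    rw [e, norm_smul, Real.norm_eq_abs, abs_of_pos (div_pos hr0 (hr i))]
    calc (r i₀ / r i) * ‖t • v - (c i - x)‖ < (r i₀ / r i) * r i :=
          mul_lt_mul_of_pos_left ht (div_pos hr0 (hr i))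
      _ = r i₀ := div_mul_cancel₀ _ (ne_of_gt (hr i))
end

section
/- For every n ≥ 3 and every point x ∈ ℝⁿ, there exist n + 1 pairwise disjoint open balls of equal radii, none containing x, that generate a shadow at x, provided there exist n + 1 pairwise disjoint open balls (of possibly different radii) with centers on a common sphere around x, none containing x, generating a shadow at x. (Reduction step: the equal-radius system is obtained by homotheties k_i = r_max/r_i centered at x.) -/
open scoped RealInnerProductSpace
set_option maxHeartbeats 1000000

theorem stmt_18 (n : ℕ) (hn : 3 ≤ n) (x : EuclideanSpace ℝ (Fin n)) (R : ℝ)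
    (c : Fin (n + 1) → EuclideanSpace ℝ (Fin n)) (r : Fin (n + 1) → ℝ) (i₀ : Fin (n + 1))
    (hr : ∀ i, 0 < r i) (hR : ∀ i, ‖c i - x‖ = R) (hrR : ∀ i, r i < R)
    (hmax : ∀ i, r i ≤ r i₀)
    (hdisj : ∀ i j, i ≠ j →
      Disjoint (Metric.ball (c i) (r i)) (Metric.ball (c j) (r j)))
    (hx : ∀ i, x ∉ Metric.ball (c i) (r i))
    (hshadow : ∀ v : EuclideanSpace ℝ (Fin n), v ≠ 0 →
      ∃ (i : Fin (n + 1)) (t : ℝ), x + t • v ∈ Metric.ball (c i) (r i)) :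
    (∀ i j, i ≠ j →
      Disjoint (Metric.ball (x + (r i₀ / r i) • (c i - x)) (r i₀))
        (Metric.ball (x + (r i₀ / r j) • (c j - x)) (r i₀))) ∧
    (∀ i, x ∉ Metric.ball (x + (r i₀ / r i) • (c i - x)) (r i₀)) ∧
    (∀ v : EuclideanSpace ℝ (Fin n), v ≠ 0 →
      ∃ (i : Fin (n + 1)) (t : ℝ),
        x + t • v ∈ Metric.ball (x + (r i₀ / r i) • (c i - x)) (r i₀)) := by
  have hs : 0 < r i₀ := hr i₀
  refine ⟨?_, ?_, ?_⟩
  · intro i j hij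
    rw [disjoint_ball_ball_iff hs hs]
    have hd : r i + r j ≤ dist (c i) (c j) :=
      (disjoint_ball_ball_iff (hr i) (hr j)).mp (hdisj i j hij)
    have hd' : r i + r j ≤ ‖(c i - x) - (c j - x)‖ := by
      rw [sub_sub_sub_cancel_right]; exact hd.trans_eq (dist_eq_norm _ _)
    rw [dist_eq_norm]
    have key : (x + (r i₀ / r i) • (c i - x)) - (x + (r i₀ / r j) • (c j - x))
        = (r i₀ / r i) • (c i - x) - (r i₀ / r j) • (c j - x) := by abel
    rw [key]
    set a := c i - x
    set b := c j - x
    set p := r i with hp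
    set q := r j with hq
    set s := r i₀ with hsd
    have hip : (inner ℝ a b : ℝ) ≤ R ^ 2 - (p + q) ^ 2 / 2 := by
      have h1 : ‖a - b‖ ^ 2 = ‖a‖ ^ 2 - 2 * (inner ℝ a b : ℝ) + ‖b‖ ^ 2 := norm_sub_sq_real a b
      have h2 : (p + q) ^ 2 ≤ ‖a - b‖ ^ 2 := by
        apply pow_le_pow_left₀ (add_pos (hr i) (hr j)).le hd'
      rw [hR i, hR j] at h1
      nlinarith
    have hDsq : (2 * s) ^ 2 ≤ ‖(s / p) • a - (s / q) • b‖ ^ 2 := by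
      have h1 : ‖(s / p) • a - (s / q) • b‖ ^ 2
          = ‖(s / p) • a‖ ^ 2 - 2 * (inner ℝ ((s / p) • a) ((s / q) • b) : ℝ) + ‖(s / q) • b‖ ^ 2 :=
        norm_sub_sq_real _ _
      rw [real_inner_smul_left, real_inner_smul_right, norm_smul, norm_smul] at h1
      have hp0 : (0 : ℝ) < p := hr i
      have hq0 : (0 : ℝ) < q := hr j
      have hps : p ≤ s := hmax i
      have hqs : q ≤ s := hmax j
      have hRpos : 0 < R := (hr i).trans (hrR i)
      have hnp : ‖(s / p : ℝ)‖ = s / p := by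
        rw [Real.norm_eq_abs, abs_of_pos (by positivity)]
      have hnq : ‖(s / q : ℝ)‖ = s / q := by
        rw [Real.norm_eq_abs, abs_of_pos (by positivity)]
      rw [hnp, hnq, hR i, hR j] at h1
      rw [h1]
      have e1 : (s / p) ^ 2 = s ^ 2 / p ^ 2 := by ring
      have hRgeps : p + q ≤ 2 * R := by
        have := hrR i; have := hrR j; linarith
      -- multiply out
      have key2 : 4 * s ^ 2 * (p * q) ^ 2 ≤
          ((s/p*R)^2 - 2*(s/p*(s/q*(inner ℝ a b : ℝ))) + (s/q*R)^2) * (p*q)^2 := by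
        have expand : ((s/p*R)^2 - 2*(s/p*(s/q*(inner ℝ a b : ℝ))) + (s/q*R)^2) * (p*q)^2
            = s^2*R^2*q^2 - 2*s^2*(p*q)*(inner ℝ a b : ℝ) + s^2*R^2*p^2 := by
          field_simp
        rw [expand]
        nlinarith [mul_le_mul_of_nonneg_left hip
            (le_of_lt (by positivity : (0:ℝ) < 2 * s^2 * (p*q))),
          mul_nonneg (mul_nonneg (sq_nonneg s) (sq_nonneg R)) (sq_nonneg (p-q)),
          mul_nonneg (mul_nonneg (sq_nonneg s) (mul_pos hp0 hq0).le) (sq_nonneg (p-q))]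
      have hpq2 : (0:ℝ) < (p*q)^2 := by positivity
      calc (2 * s) ^ 2 = 4 * s ^ 2 := by ring
        _ ≤ _ := le_of_mul_le_mul_right key2 hpq2
    have hD0 : (0:ℝ) ≤ ‖(s / p) • a - (s / q) • b‖ := norm_nonneg _
    have h2s := le_of_pow_le_pow_left₀ two_ne_zero hD0 hDsq
    linarith
  · intro i hmem
    rw [Metric.mem_ball, dist_eq_norm] at hmem
    have key : x - (x + (r i₀ / r i) • (c i - x)) = -((r i₀ / r i) • (c i - x)) := by abel
    rw [key, norm_neg, norm_smul, Real.norm_eq_abs,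
      abs_of_pos (div_pos hs (hr i)), hR i] at hmem
    have : r i₀ ≤ r i₀ / r i * R := by
      rw [div_mul_eq_mul_div, le_div_iff₀ (hr i)]
      nlinarith [hrR i, hs]
    linarith
  · intro v hv
    obtain ⟨i, t, ht⟩ := hshadow v hv
    refine ⟨i, (r i₀ / r i) * t, ?_⟩
    rw [Metric.mem_ball, dist_eq_norm] at ht ⊢
    have key : x + ((r i₀ / r i) * t) • v - (x + (r i₀ / r i) • (c i - x))
        = (r i₀ / r i) • (x + t • v - c i) := by
      module
    rw [key, norm_smul, Real.norm_eq_abs, abs_of_pos (div_pos hs (hr i))]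
    calc r i₀ / r i * ‖x + t • v - c i‖ < r i₀ / r i * r i :=
          mul_lt_mul_of_pos_left ht (div_pos hs (hr i))
      _ = r i₀ := by rw [div_mul_cancel₀ _ (hr i).ne']
end
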